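/- Let κ = sup_{N₁(x)=1} N₂(x) < 1 and fix m with N₂(m)=1 and b > 0. The surface S = {ρ(x)x : N₁(x)=1, m·p₁(x) ≥ 1}, with ρ(x) = b/(1 − x·p₂(m)), lies in the hyperplane-like level set {X : N₁(X) = p₂(m)·X + b}, and at each of its points the vector ν = p₁(x) − p₂(m) satisfies x·ν > 0 and m·ν ≥ 0. -/

import Mathlib

open RealInnerProductSpace

open Filter Topology

variable {n : ℕ}

/-- Directional derivative of a function with gradient `p` at `m`. -/
lemma aux_dirDeriv (N : EuclideanSpace ℝ (Fin n) → ℝ) (p m y : EuclideanSpace ℝ (Fin n))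
    (h : HasGradientAt N p m) :
    HasDerivAt (fun t : ℝ => N (m + t • y)) ⟪p, y⟫ 0 := by
  have hg : HasDerivAt (fun t : ℝ => m + t • y) y 0 := by
    simpa using ((hasDerivAt_id (0:ℝ)).smul_const y).const_add m
  have h' : HasFDerivAt N ((InnerProductSpace.toDual ℝ (EuclideanSpace ℝ (Fin n))) p)
      (m + (0:ℝ) • y) := by simpa using h.hasFDerivAt
  have := h'.comp_hasDerivAt 0 hg
  simpa [InnerProductSpace.toDual_apply_apply, Function.comp_def] using this

/-- Subgradient inequality from subadditivity + homogeneity. -/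
lemma aux_subgrad (N : EuclideanSpace ℝ (Fin n) → ℝ)
    (hadd : ∀ x y, N (x + y) ≤ N x + N y)
    (hsmul : ∀ (c : ℝ) x, N (c • x) = |c| * N x)
    (p m y : EuclideanSpace ℝ (Fin n)) (h : HasGradientAt N p m) :
    ⟪p, y⟫ ≤ N y := by
  have hd := aux_dirDeriv N p m y h
  have hslope : Tendsto (slope (fun t : ℝ => N (m + t • y)) 0) (𝓝[≠] 0) (𝓝 ⟪p, y⟫) :=
    hasDerivAt_iff_tendsto_slope.mp hd
  have hslope' : Tendsto (slope (fun t : ℝ => N (m + t • y)) 0) (𝓝[>] 0) (𝓝 ⟪p, y⟫) :=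
    hslope.mono_left (nhdsWithin_mono 0 fun t ht => ne_of_gt ht)
  refine le_of_tendsto hslope' ?_
  filter_upwards [self_mem_nhdsWithin] with t (ht : 0 < t)
  have h1 : N (m + t • y) ≤ N m + t * N y := by
    have := hadd m (t • y)
    rw [hsmul t y, abs_of_pos ht] at this
    exact this
  have : slope (fun t : ℝ => N (m + t • y)) 0 t = (N (m + t • y) - N m) / t := by
    simp [slope_def_field]
  rw [this]
  rw [div_le_iff₀ ht]
  nlinarith

/-- Euler identity: `⟪p, x⟫ = N x` for 1-homogeneous differentiable `N`. -/
lemma aux_euler (N : EuclideanSpace ℝ (Fin n) → ℝ)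
    (hsmul : ∀ (c : ℝ) x, N (c • x) = |c| * N x)
    (p x : EuclideanSpace ℝ (Fin n)) (h : HasGradientAt N p x) :
    ⟪p, x⟫ = N x := by
  have hd := aux_dirDeriv N p x x h
  have hd2 : HasDerivAt (fun t : ℝ => (1 + t) * N x) (N x) 0 := by
    simpa using ((hasDerivAt_id (0:ℝ)).const_add 1).mul_const (N x)
  have heq : (fun t : ℝ => N (x + t • x)) =ᶠ[𝓝 (0:ℝ)] fun t => (1 + t) * N x := by
    filter_upwards [Ioo_mem_nhds (by norm_num : (-1:ℝ) < 0) (by norm_num : (0:ℝ) < 1)]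
      with t ht
    have : x + t • x = (1 + t) • x := by module
    rw [this, hsmul, abs_of_pos (by linarith [ht.1])]
  exact ((hd2.congr_of_eventuallyEq heq).unique hd).symm

/-- With `κ = sup_{N₁(x)=1} N₂(x) < 1`, `N₂(m)=1` and `b > 0`: each point `ρ(x)x` of the
uniformly refracting surface `S_I(m,b)` (where `ρ(x) = b/(1 − x·p₂(m))`, `N₁(x)=1`,
`m·p₁(x) ≥ 1`) lies on the level set `{X : N₁(X) = p₂(m)·X + b}`, and the normal
`ν = p₁(x) − p₂(m)` satisfies `x·ν > 0` and `m·ν ≥ 0`. -/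
theorem stmt12 {n : ℕ} (N₁ N₂ : EuclideanSpace ℝ (Fin n) → ℝ)
    (hN₁_add : ∀ x y, N₁ (x + y) ≤ N₁ x + N₁ y)
    (hN₁_smul : ∀ (c : ℝ) x, N₁ (c • x) = |c| * N₁ x)
    (hN₁_pos : ∀ x, x ≠ 0 → 0 < N₁ x)
    (hN₂_add : ∀ x y, N₂ (x + y) ≤ N₂ x + N₂ y)
    (hN₂_smul : ∀ (c : ℝ) x, N₂ (c • x) = |c| * N₂ x)
    (hN₂_pos : ∀ x, x ≠ 0 → 0 < N₂ x)
    (p₁ p₂ : EuclideanSpace ℝ (Fin n) → EuclideanSpace ℝ (Fin n))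
    (hp₁ : ∀ x, x ≠ 0 → HasGradientAt N₁ (p₁ x) x)
    (hp₂ : ∀ x, x ≠ 0 → HasGradientAt N₂ (p₂ x) x)
    (κ : ℝ) (hκ : IsLUB {r : ℝ | ∃ x, N₁ x = 1 ∧ r = N₂ x} κ) (hκ1 : κ < 1)
    (m : EuclideanSpace ℝ (Fin n)) (hm : N₂ m = 1) (b : ℝ) (hb : 0 < b)
    (x : EuclideanSpace ℝ (Fin n)) (hx : N₁ x = 1) (hxm : 1 ≤ ⟪m, p₁ x⟫) :
    N₁ ((b / (1 - ⟪x, p₂ m⟫)) • x)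
      = ⟪p₂ m, (b / (1 - ⟪x, p₂ m⟫)) • x⟫ + b ∧
    0 < ⟪x, p₁ x - p₂ m⟫ ∧ 0 ≤ ⟪m, p₁ x - p₂ m⟫ := by

  have hN₁0 : N₁ 0 = 0 := by simpa using hN₁_smul 0 0
  have hN₂0 : N₂ 0 = 0 := by simpa using hN₂_smul 0 0
  have hx0 : x ≠ 0 := by rintro rfl; rw [hN₁0] at hx; norm_num at hx
  have hm0 : m ≠ 0 := by rintro rfl; rw [hN₂0] at hm; norm_num at hm
  -- κ bound
  have hN₂x : N₂ x ≤ κ := hκ.1 ⟨x, hx, rfl⟩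
  -- subgradient inequality
  have hsub : ⟪p₂ m, x⟫ ≤ N₂ x := aux_subgrad N₂ hN₂_add hN₂_smul _ _ x (hp₂ m hm0)
  have ht : ⟪x, p₂ m⟫ < 1 := by
    rw [real_inner_comm]; linarith
  set t : ℝ := ⟪x, p₂ m⟫ with htdef
  have h1t : 0 < 1 - t := by linarith
  have hρ : 0 < b / (1 - t) := div_pos hb h1t
  -- Euler identities
  have he₁ : ⟪p₁ x, x⟫ = 1 := by rw [aux_euler N₁ hN₁_smul _ _ (hp₁ x hx0), hx]
  have he₂ : ⟪p₂ m, m⟫ = 1 := by rw [aux_euler N₂ hN₂_smul _ _ (hp₂ m hm0), hm]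
  refine ⟨?_, ?_, ?_⟩
  · rw [hN₁_smul, abs_of_pos hρ, hx, real_inner_smul_right, real_inner_comm, ← htdef,
      mul_one]
    field_simp
    ring
  · have he₁' : ⟪x, p₁ x⟫ = 1 := by rw [real_inner_comm]; exact he₁
    rw [inner_sub_right, he₁']
    linarith
  · have he₂' : ⟪m, p₂ m⟫ = 1 := by rw [real_inner_comm]; exact he₂
    rw [inner_sub_right, he₂']
    linarith
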